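/- Let X be a finite poset such that there exist a Noetherian local UFD A and a dimension-preserving saturated embedding φ : X → Spec(A). Then X has a unique minimal node and a unique maximal node, and whenever x, y ∈ X satisfy ht(x) = 1 and y covers x, one has ht(y) = 2. -/

import Mathlib

open Ideal

/-! ### Artinian auxiliary lemmas -/

theorem myIsArtinianRing_of_isField {K : Type*} [CommRing K] (h : IsField K) :
    IsArtinianRing K := by
  letI := h.toField
  exact DivisionRing.instIsArtinianRing

theorem myIsArtinian_of_quotient_action {R : Type*} [CommRing R] (I : Ideal R) {M : Type*}
    [AddCommGroup M] [Module R M] [mod2 : Module (R ⧸ I) M] [IsScalarTower R (R ⧸ I) M]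
    (h : IsArtinian (R ⧸ I) M) : IsArtinian R M := by
  rw [isArtinian_iff] at h ⊢
  let f : Submodule R M → Submodule (R ⧸ I) M := fun p =>
    { carrier := p
      add_mem' := fun ha hb => p.add_mem ha hb
      zero_mem' := p.zero_mem
      smul_mem' := by
        intro c x hx
        obtain ⟨r, rfl⟩ := Ideal.Quotient.mk_surjective c
        have hrw : (Ideal.Quotient.mk I r) • x = r • x := by
          rw [← Ideal.Quotient.algebraMap_eq, algebraMap_smul]
        rw [hrw]
        exact p.smul_mem r hx }
  have hmem : ∀ (p : Submodule R M) (x : M), x ∈ f p ↔ x ∈ p := fun p x => Iff.rfl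
  have hf : ∀ a b : Submodule R M, a < b → f a < f b := by
    intro a b hab
    rw [lt_iff_le_not_ge] at hab ⊢
    constructor
    · intro x hx
      rw [hmem] at hx ⊢
      exact hab.1 hx
    · intro hle
      apply hab.2
      intro x hx
      have : x ∈ f a := hle ((hmem b x).mpr hx)
      exact (hmem a x).mp this
  exact Subrelation.wf (fun {a b} hab => hf a b hab) (InvImage.wf f h)

theorem myIsArtinian_of_pow_smul_eq_bot {R M : Type*} [CommRing R] [AddCommGroup M] [Module R M]
    [IsNoetherianRing R] [Module.Finite R M]
    (I : Ideal R) [I.IsMaximal] (k : ℕ) (h : I ^ k • (⊤ : Submodule R M) = ⊥) :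
    IsArtinian R M := by
  induction k generalizing M with
  | zero =>
    rw [pow_zero, Ideal.one_eq_top, Submodule.top_smul] at h
    haveI : Subsingleton M := by
      constructor
      intro a b
      have ha : a ∈ (⊥ : Submodule R M) := h ▸ Submodule.mem_top
      have hb : b ∈ (⊥ : Submodule R M) := h ▸ Submodule.mem_top
      simp only [Submodule.mem_bot] at ha hb
      rw [ha, hb]
    haveI : Finite M := Finite.of_subsingleton
    exact isArtinian_of_finite
  | succ k ih =>
    set N : Submodule R M := I • ⊤ with hN
    haveI : IsNoetherian R M := isNoetherian_of_isNoetherianRing_of_finite R M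
    haveI : Module.Finite R N := Module.Finite.iff_fg.mpr (IsNoetherian.noetherian N)
    have hNk : I ^ k • (⊤ : Submodule R N) = ⊥ := by
      have hmap : Submodule.map N.subtype (I ^ k • (⊤ : Submodule R N)) = ⊥ := by
        rw [Submodule.map_smul'', Submodule.map_top, Submodule.range_subtype]
        show I ^ k • (I • (⊤ : Submodule R M)) = ⊥
        rw [← Submodule.smul_assoc, Ideal.smul_eq_mul, ← pow_succ]
        exact h
      have hinj := Submodule.map_injective_of_injective N.injective_subtype
      rw [← Submodule.map_bot N.subtype] at hmap
      exact hinj hmap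
    haveI : IsArtinian R N := ih hNk
    have htors : Module.IsTorsionBySet R (M ⧸ N) I := by
      intro m r
      obtain ⟨m, rfl⟩ := Submodule.Quotient.mk_surjective N m
      rw [← Submodule.Quotient.mk_smul, Submodule.Quotient.mk_eq_zero]
      exact Submodule.smul_mem_smul r.2 Submodule.mem_top
    letI mod1 : Module (R ⧸ I) (M ⧸ N) := htors.module
    haveI tow1 : IsScalarTower R (R ⧸ I) (M ⧸ N) := htors.isScalarTower (S := R)
    haveI artR : IsArtinianRing (R ⧸ I) := myIsArtinianRing_of_isField
      ((Ideal.Quotient.maximal_ideal_iff_isField_quotient I).mp ‹I.IsMaximal›)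
    haveI fin1 : Module.Finite (R ⧸ I) (M ⧸ N) := Module.Finite.of_restrictScalars_finite R _ _
    haveI art1 : IsArtinian (R ⧸ I) (M ⧸ N) := isArtinian_of_fg_of_artinian'
    haveI art2 : IsArtinian R (M ⧸ N) := myIsArtinian_of_quotient_action I art1
    exact isArtinian_of_range_eq_ker N.subtype N.mkQ
      (by rw [Submodule.range_subtype, Submodule.ker_mkQ])

/-! ### Krull's principal ideal theorem, local domain version -/

theorem myPIT_local {R : Type*} [CommRing R] [IsDomain R] [IsNoetherianRing R] [IsLocalRing R]
    {x : R} (hrad : (Ideal.span {x}).radical = IsLocalRing.maximalIdeal R)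
    {P : Ideal R} [hPp : P.IsPrime] (hP : P < IsLocalRing.maximalIdeal R) : P = ⊥ := by
  classical
  set mI : Ideal R := IsLocalRing.maximalIdeal R with hm
  set J : Ideal R := Ideal.span {x} with hJdef
  have hxP : x ∉ P := by
    intro hxP
    have h1 : J ≤ P := by rw [hJdef, Ideal.span_le]; simpa using hxP
    have h2 : mI ≤ P := by
      rw [← hrad]
      calc J.radical ≤ P.radical := Ideal.radical_mono h1
        _ = P := hPp.radical
    exact absurd (lt_of_lt_of_le hP h2) (lt_irrefl P)
  obtain ⟨k, hk⟩ := Ideal.exists_radical_pow_le_of_fg J (IsNoetherian.noetherian _)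
  rw [hrad] at hk
  haveI : Module.Finite R (R ⧸ J) := Module.Finite.of_surjective
    (Submodule.mkQ J) (Submodule.Quotient.mk_surjective J)
  have hsmul : mI ^ k • (⊤ : Submodule R (R ⧸ J)) = ⊥ := by
    rw [eq_bot_iff]
    refine Submodule.smul_le.mpr ?_
    intro r hr n _
    obtain ⟨b, rfl⟩ := Submodule.Quotient.mk_surjective J n
    rw [← Submodule.Quotient.mk_smul, Submodule.mem_bot, Submodule.Quotient.mk_eq_zero,
      smul_eq_mul]
    exact J.mul_mem_right b (hk hr)
  haveI artJ : IsArtinian R (R ⧸ J) := myIsArtinian_of_pow_smul_eq_bot mI k hsmul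
  -- symbolic powers
  set Rp := Localization.AtPrime P with hRp
  set F : R →+* Rp := algebraMap R Rp with hF
  set pn : ℕ → Ideal R := fun n => ((P.map F) ^ n).comap F with hpn
  have hdesc : ∀ n, pn (n + 1) ≤ pn n := fun n =>
    Ideal.comap_mono (Ideal.pow_le_pow_right (Nat.le_succ n))
  have hdesc' : ∀ n j, n ≤ j → pn j ≤ pn n := by
    intro n j hnj
    induction hnj with
    | refl => exact le_refl _
    | step h ih => exact le_trans (hdesc _) ih
  have hprimary : ∀ n, ∀ a b : R, b ∉ P → a * b ∈ pn n → a ∈ pn n := by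
    intro n a b hb hab
    have hu : IsUnit (F b) := IsLocalization.map_units Rp (⟨b, hb⟩ : P.primeCompl)
    have hmem : F a * F b ∈ (P.map F) ^ n := by
      rw [← _root_.map_mul]; exact hab
    obtain ⟨u, hu⟩ := hu
    have heq : F a = (F a * F b) * ((u⁻¹ : Rpˣ) : Rp) := by
      rw [mul_assoc, ← hu, Units.mul_inv, mul_one]
    rw [Ideal.mem_comap, heq]
    exact Ideal.mul_mem_right _ _ hmem
  -- the chain (pn n ⊔ J) stabilizes
  have hstab : ∃ n, ∀ j, n ≤ j → pn j ⊔ J = pn (j + 1) ⊔ J := by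
    let g : ℕ →o (Submodule R (R ⧸ J))ᵒᵈ :=
      ⟨fun n => Submodule.map J.mkQ (pn n ⊔ J), by
        intro n j hnj
        exact Submodule.map_mono (sup_le_sup_right (hdesc' n j hnj) J)⟩
    obtain ⟨n, hn⟩ := (monotone_stabilizes_iff_artinian (R := R) (M := R ⧸ J)).mpr artJ g
    refine ⟨n, fun j hj => ?_⟩
    have h1 : g j = g (j + 1) := by
      rw [← hn j hj, ← hn (j + 1) (le_trans hj (Nat.le_succ j))]
    have h2 : Submodule.comap J.mkQ (Submodule.map J.mkQ (pn j ⊔ J)) =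
        Submodule.comap J.mkQ (Submodule.map J.mkQ (pn (j + 1) ⊔ J)) := by
      exact congrArg _ h1
    rwa [Submodule.comap_map_eq, Submodule.comap_map_eq, Submodule.ker_mkQ,
      sup_assoc, sup_idem, sup_assoc, sup_idem] at h2
  obtain ⟨n, hn⟩ := hstab
  have hstep : ∀ j, pn j ⊔ J = pn (j + 1) ⊔ J → pn j = pn (j + 1) := by
    intro j hj
    refine le_antisymm ?_ (hdesc j)
    have hsub : pn j ≤ pn (j + 1) ⊔ mI • pn j := by
      intro a ha
      have h1 : a ∈ pn (j + 1) ⊔ J := by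
        rw [← hj]; exact Submodule.mem_sup_left ha
      obtain ⟨c, hc, d, hd, rfl⟩ := Submodule.mem_sup.mp h1
      obtain ⟨r, rfl⟩ := Ideal.mem_span_singleton'.mp hd
      have hrx : r * x ∈ pn j := by
        have h2 : (c + r * x) - c ∈ pn j := Submodule.sub_mem _ ha (hdesc j hc)
        rwa [add_sub_cancel_left] at h2
      have hr : r ∈ pn j := hprimary j r x hxP hrx
      refine Submodule.mem_sup.mpr ⟨c, hc, r * x, ?_, rfl⟩
      rw [Ideal.smul_eq_mul, mul_comm r x]
      exact Ideal.mul_mem_mul (by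
        have : x ∈ J := Ideal.subset_span rfl
        have : x ∈ J.radical := Ideal.le_radical this
        rwa [hrad] at this) hr
    have hNak := Submodule.sup_eq_sup_smul_of_le_smul_of_le_jacobson
      (I := mI) (J := (⊥ : Ideal R)) (N := pn (j + 1)) (N' := pn j)
      (IsNoetherian.noetherian _)
      (by rw [IsLocalRing.jacobson_eq_maximalIdeal (⊥ : Ideal R) bot_ne_top])
      hsub
    rw [Submodule.bot_smul, sup_bot_eq] at hNak
    exact le_of_sup_eq (sup_comm (pn (j+1)) (pn j) ▸ hNak)
  have heq2 : pn (n + 1) = pn (n + 2) := hstep (n + 1) (hn (n + 1) (Nat.le_succ n))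
  -- push to the localization
  have hmapeq : (P.map F) ^ (n + 1) = (P.map F) ^ (n + 2) := by
    have h1 := congrArg (Ideal.map F) heq2
    rwa [hpn, IsLocalization.map_comap P.primeCompl Rp, IsLocalization.map_comap P.primeCompl Rp]
      at h1
  haveI : IsNoetherianRing Rp := IsLocalization.isNoetherianRing P.primeCompl Rp ‹_›
  set Q : Ideal Rp := P.map F with hQdef
  have hQmax : Q = IsLocalRing.maximalIdeal Rp := Localization.AtPrime.map_eq_maximalIdeal
  have hQpow : Q ^ (n + 1) = ⊥ := by
    refine Submodule.eq_bot_of_le_smul_of_le_jacobson_bot Q (Q ^ (n + 1))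
      (IsNoetherian.noetherian _) ?_ ?_
    · rw [Ideal.smul_eq_mul, ← pow_succ']
      exact le_of_eq hmapeq
    · rw [IsLocalRing.jacobson_eq_maximalIdeal (⊥ : Ideal Rp) bot_ne_top, ← hQmax]
  have hQbot : Q = ⊥ := by
    rw [eq_bot_iff]
    intro a ha
    have h1 : a ^ (n + 1) ∈ Q ^ (n + 1) := Ideal.pow_mem_pow ha (n + 1)
    rw [hQpow, Ideal.mem_bot] at h1
    rw [Ideal.mem_bot]
    exact pow_eq_zero_iff (Nat.succ_ne_zero n) |>.mp h1
  have hinj : Function.Injective F := IsLocalization.injective Rp P.primeCompl_le_nonZeroDivisors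
  rw [eq_bot_iff]
  intro a ha
  have h1 : F a ∈ Q := Ideal.mem_map_of_mem F ha
  rw [hQbot, Ideal.mem_bot] at h1
  rw [Ideal.mem_bot]
  exact hinj (by rw [h1, map_zero])

/-- In the localization at `q`, the radical of the image of an ideal `I` for which `q`
is the unique prime between `I` and `q` is the maximal ideal. -/
theorem myRadical_map_eq_maximalIdeal {A : Type*} [CommRing A] {q : Ideal A} [hq : q.IsPrime]
    {I : Ideal A} (hIq : I ≤ q)
    (hmin : ∀ u : Ideal A, u.IsPrime → I ≤ u → u ≤ q → u = q) :
    (I.map (algebraMap A (Localization.AtPrime q))).radical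
      = IsLocalRing.maximalIdeal (Localization.AtPrime q) := by
  set Rq := Localization.AtPrime q
  set F : A →+* Rq := algebraMap A Rq with hF
  have hmax : q.map F = IsLocalRing.maximalIdeal Rq := Localization.AtPrime.map_eq_maximalIdeal
  refine le_antisymm ?_ ?_
  · have h1 : I.map F ≤ q.map F := Ideal.map_mono hIq
    rw [hmax] at h1
    calc (I.map F).radical ≤ (IsLocalRing.maximalIdeal Rq).radical := Ideal.radical_mono h1
      _ = IsLocalRing.maximalIdeal Rq :=
          (IsLocalRing.maximalIdeal.isMaximal Rq).isPrime.radical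
  · rw [Ideal.radical_eq_sInf]
    refine le_sInf ?_
    rintro K ⟨hIK, hKp⟩
    have hKtop : K ≠ ⊤ := hKp.ne_top
    have hKle : K ≤ IsLocalRing.maximalIdeal Rq := IsLocalRing.le_maximalIdeal hKtop
    haveI := hKp
    have hu : (K.comap F).IsPrime := Ideal.IsPrime.comap F
    have huI : I ≤ K.comap F := le_trans Ideal.le_comap_map (Ideal.comap_mono hIK)
    have huq : K.comap F ≤ q := by
      have h2 := Ideal.comap_mono (f := F) hKle
      exact le_trans h2 (le_of_eq Localization.AtPrime.comap_maximalIdeal)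
    have := hmin (K.comap F) hu huI huq
    calc IsLocalRing.maximalIdeal Rq = q.map F := hmax.symm
      _ = (K.comap F).map F := by rw [this]
      _ ≤ K := Ideal.map_comap_le

/-- Krull's principal ideal theorem for Noetherian domains: if `q` is minimal over the
principal ideal `(x)`, then any prime strictly below `q` is zero. -/
theorem myPIT {A : Type*} [CommRing A] [IsDomain A] [IsNoetherianRing A] {x : A} {q : Ideal A}
    [hq : q.IsPrime] (hmin : ∀ u : Ideal A, u.IsPrime → x ∈ u → u ≤ q → u = q) (hxq : x ∈ q)
    {s : Ideal A} [hsp : s.IsPrime] (hs : s < q) : s = ⊥ := by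
  set Rq := Localization.AtPrime q
  set F : A →+* Rq := algebraMap A Rq with hF
  haveI : IsNoetherianRing Rq := IsLocalization.isNoetherianRing q.primeCompl Rq ‹_›
  have hrad : (Ideal.span {F x}).radical = IsLocalRing.maximalIdeal Rq := by
    have h1 : Ideal.span {F x} = (Ideal.span {x}).map F := by
      rw [Ideal.map_span, Set.image_singleton]
    rw [h1]
    refine myRadical_map_eq_maximalIdeal (by rwa [Ideal.span_le, Set.singleton_subset_iff]) ?_
    intro u hu hxu huq
    exact hmin u hu (by rw [Ideal.span_le, Set.singleton_subset_iff] at hxu; exact hxu) huq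
  have hdisj : Disjoint (q.primeCompl : Set A) (s : Set A) := by
    rw [Set.disjoint_left]
    intro a ha has
    exact ha (hs.le has)
  haveI hSp : (s.map F).IsPrime :=
    IsLocalization.isPrime_of_isPrime_disjoint q.primeCompl Rq s hsp hdisj
  have hScomap : (s.map F).comap F = s :=
    IsLocalization.comap_map_of_isPrime_disjoint q.primeCompl Rq hsp hdisj
  have hmax : q.map F = IsLocalRing.maximalIdeal Rq := Localization.AtPrime.map_eq_maximalIdeal
  have hSlt : s.map F < IsLocalRing.maximalIdeal Rq := by
    refine lt_of_le_of_ne ?_ ?_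
    · rw [← hmax]; exact Ideal.map_mono hs.le
    · intro hcontra
      have h1 : ((s.map F).comap F : Ideal A) = q := by
        rw [hcontra]; exact Localization.AtPrime.comap_maximalIdeal
      rw [hScomap] at h1
      exact hs.ne h1
  have hSbot : s.map F = ⊥ := myPIT_local hrad hSlt
  have hinj : Function.Injective F := IsLocalization.injective Rq q.primeCompl_le_nonZeroDivisors
  rw [eq_bot_iff]
  intro a ha
  have h1 : F a ∈ s.map F := Ideal.mem_map_of_mem F ha
  rw [hSbot, Ideal.mem_bot] at h1
  rw [Ideal.mem_bot]
  exact hinj (by rw [h1, map_zero])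

/-- Key ring-theoretic fact: in a Noetherian UFD, a prime `q` covering a height-one prime `p`
cannot admit a chain `⊥ < c₁ < c₂ < q` below it. -/
theorem myRing_main {A : Type*} [CommRing A] [IsDomain A] [IsNoetherianRing A]
    [UniqueFactorizationMonoid A] {p q : Ideal A} (hpp : p.IsPrime) (hqp : q.IsPrime)
    (hpbot : p ≠ ⊥)
    (h1 : ∀ t : Ideal A, t.IsPrime → t < p → t = ⊥)
    (hpq : p < q)
    (hsat : ∀ t : Ideal A, t.IsPrime → p < t → ¬t < q)
    {c₁ c₂ : Ideal A} (hc₁p : c₁.IsPrime) (hc₂p : c₂.IsPrime)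
    (hc1 : c₁ ≠ ⊥) (h12 : c₁ < c₂) (h2q : c₂ < q) : False := by
  classical
  haveI := hpp; haveI := hqp; haveI := hc₁p; haveI := hc₂p
  -- p is principal, generated by a prime element f
  obtain ⟨f, hfp, hf⟩ := hpp.exists_mem_prime_of_ne_bot hpbot
  have hspan : Ideal.span {f} = p := by
    have hle : Ideal.span {f} ≤ p := by rw [Ideal.span_le]; simpa using hfp
    rcases lt_or_eq_of_le hle with hlt | heq
    · exfalso
      have hprime : (Ideal.span {f} : Ideal A).IsPrime :=
        (Ideal.span_singleton_prime hf.ne_zero).mpr hf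
      have := h1 _ hprime hlt
      rw [Ideal.span_singleton_eq_bot] at this
      exact hf.ne_zero this
    · exact heq
  -- pick g ∈ q \ p
  obtain ⟨g, hgq, hgp⟩ := SetLike.exists_of_lt hpq
  -- q is minimal over {f, g}
  have hq2min : ∀ u : Ideal A, u.IsPrime → f ∈ u → g ∈ u → u ≤ q → u = q := by
    intro u hu hfu hgu huq
    have hpu : p ≤ u := by rw [← hspan, Ideal.span_le]; simpa using hfu
    rcases lt_or_eq_of_le hpu with hlt | heq
    · by_contra hne
      exact hsat u hu hlt (lt_of_le_of_ne huq hne)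
    · exact absurd (heq ▸ hgu) hgp
  have hfq : f ∈ q := hpq.le hfp
  -- choose r maximal among primes with c₂ ≤ r < q
  have hSmax : ∃ r : Ideal A, (r.IsPrime ∧ c₂ ≤ r ∧ r < q) ∧
      ∀ t : Ideal A, (t.IsPrime ∧ c₂ ≤ t ∧ t < q) → r ≤ t → t = r := by
    have hmax := set_has_maximal_iff_noetherian.mpr ‹IsNoetherianRing A›
      {t : Ideal A | t.IsPrime ∧ c₂ ≤ t ∧ t < q} ⟨c₂, hc₂p, le_refl _, h2q⟩
    obtain ⟨r, hrS, hrm⟩ := hmax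
    exact ⟨r, hrS, fun t htS hrt => le_antisymm (by
      by_contra hnle
      exact hrm t htS (lt_of_le_of_ne hrt (fun h => hnle (le_of_eq h.symm)))) hrt⟩
  obtain ⟨r, ⟨hrp, hc2r, hrq⟩, hrmax⟩ := hSmax
  haveI := hrp
  -- r is covered by q among primes
  have hcov : ∀ t : Ideal A, t.IsPrime → r < t → ¬t < q := by
    intro t ht hrt htq
    have := hrmax t ⟨ht, le_trans hc2r hrt.le, htq⟩ hrt.le
    exact hrt.ne' this
  -- choose x₁ ∉ r among f, g
  have hfg : ¬(f ∈ r ∧ g ∈ r) := by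
    rintro ⟨hfr, hgr⟩
    exact hrq.ne (hq2min r hrp hfr hgr hrq.le)
  obtain ⟨x₁, x₂, hx₁r, hx₁q, hx₂q, hswap⟩ :
      ∃ x₁ x₂ : A, x₁ ∉ r ∧ x₁ ∈ q ∧ x₂ ∈ q ∧
        (∀ u : Ideal A, u.IsPrime → x₁ ∈ u → x₂ ∈ u → u ≤ q → u = q) := by
    by_cases hfr : f ∈ r
    · have hgr : g ∉ r := fun hgr => hfg ⟨hfr, hgr⟩
      exact ⟨g, f, hgr, hgq, hfq, fun u hu h1 h2 h3 => hq2min u hu h2 h1 h3⟩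
    · exact ⟨f, g, hfr, hfq, hgq, fun u hu h1 h2 h3 => hq2min u hu h1 h2 h3⟩
  -- localize at q to produce the key element y
  set Rq := Localization.AtPrime q
  set F : A →+* Rq := algebraMap A Rq with hFdef
  have hrx₁q : r ⊔ Ideal.span {x₁} ≤ q := by
    refine sup_le hrq.le ?_
    rw [Ideal.span_le]; simpa using hx₁q
  have hminrx : ∀ u : Ideal A, u.IsPrime → r ⊔ Ideal.span {x₁} ≤ u → u ≤ q → u = q := by
    intro u hu hle huq
    have hru : r ≤ u := le_trans le_sup_left hle
    have hx₁u : x₁ ∈ u := by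
      have : Ideal.span {x₁} ≤ u := le_trans le_sup_right hle
      rw [Ideal.span_le] at this; simpa using this
    rcases lt_or_eq_of_le hru with hlt | heq
    · by_contra hne
      exact hcov u hu hlt (lt_of_le_of_ne huq hne)
    · exact absurd (heq ▸ hx₁u) hx₁r
  have hrad : ((r ⊔ Ideal.span {x₁}).map F).radical = IsLocalRing.maximalIdeal Rq :=
    myRadical_map_eq_maximalIdeal hrx₁q hminrx
  have hx₂rad : F x₂ ∈ ((r ⊔ Ideal.span {x₁}).map F).radical := by
    rw [hrad, ← Localization.AtPrime.map_eq_maximalIdeal]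
    exact Ideal.mem_map_of_mem F hx₂q
  obtain ⟨m, hm⟩ := hx₂rad
  rw [← map_pow] at hm
  rw [IsLocalization.mem_map_algebraMap_iff q.primeCompl Rq] at hm
  obtain ⟨⟨w, s⟩, hws⟩ := hm
  rw [← _root_.map_mul] at hws
  have hinj : Function.Injective F := IsLocalization.injective Rq q.primeCompl_le_nonZeroDivisors
  have hkeyeq : x₂ ^ m * (s : A) = (w : A) := hinj hws
  -- decompose w = y + a * x₁ with y ∈ r
  obtain ⟨y, hy, z, hz, hwyz⟩ := Submodule.mem_sup.mp w.2
  obtain ⟨a, haz⟩ := Ideal.mem_span_singleton'.mp hz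
  -- key property of y
  have hkey : ∀ u : Ideal A, u.IsPrime → y ∈ u → x₁ ∈ u → u ≤ q → u = q := by
    intro u hu hyu hx₁u huq
    have hwu : (w : A) ∈ u := by
      rw [← hwyz]
      exact Submodule.add_mem u hyu (haz ▸ u.mul_mem_left a hx₁u)
    have hx₂u : x₂ ∈ u := by
      have h2 : x₂ ^ m * (s : A) ∈ u := hkeyeq ▸ hwu
      have hsu : (s : A) ∉ u := fun hsu => s.2 (huq hsu)
      rcases hu.mem_or_mem h2 with h3 | h3
      · exact hu.mem_of_pow_mem m h3
      · exact absurd h3 hsu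
    exact hswap u hu hx₁u hx₂u huq
  -- r is minimal over (y)
  have hminr : ∀ t : Ideal A, t.IsPrime → y ∈ t → t ≤ r → t = r := by
    intro t ht hyt htr
    by_contra hne
    have htlt : t < r := lt_of_le_of_ne htr hne
    -- work in A ⧸ t
    set B := A ⧸ t
    set mk : A →+* B := Ideal.Quotient.mk t with hmkdef
    have hmksurj : Function.Surjective mk := Ideal.Quotient.mk_surjective
    haveI : IsDomain B := Ideal.Quotient.isDomain t
    have hker : RingHom.ker mk = t := Ideal.mk_ker
    haveI hr'p : (r.map mk).IsPrime :=
      Ideal.map_isPrime_of_surjective hmksurj (by rw [hker]; exact htlt.le)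
    haveI hq'p : (q.map mk).IsPrime :=
      Ideal.map_isPrime_of_surjective hmksurj (by rw [hker]; exact le_trans htlt.le hrq.le)
    have hcomap : ∀ u : Ideal A, t ≤ u → (u.map mk).comap mk = u := by
      intro u htu
      rw [Ideal.comap_map_of_surjective mk hmksurj]
      have : Ideal.comap mk ⊥ = t := by
        rw [← RingHom.ker_eq_comap_bot, hker]
      rw [this, sup_eq_left.mpr htu]
    have hmin' : ∀ u' : Ideal B, u'.IsPrime → mk x₁ ∈ u' → u' ≤ q.map mk → u' = q.map mk := by
      intro u' hu' hx₁u' hu'q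
      haveI := hu'
      have hup : (u'.comap mk).IsPrime := Ideal.IsPrime.comap mk
      have hyu : y ∈ u'.comap mk := by
        rw [Ideal.mem_comap]
        have : mk y = 0 := by
          rw [← RingHom.mem_ker, hker]; exact hyt
        rw [this]; exact u'.zero_mem
      have hx₁u : x₁ ∈ u'.comap mk := hx₁u'
      have huq : u'.comap mk ≤ q := by
        have h4 := Ideal.comap_mono (f := mk) hu'q
        rwa [hcomap q (le_trans htlt.le hrq.le)] at h4
      have h5 := hkey _ hup hyu hx₁u huq
      have h6 : (u'.comap mk).map mk = u' := Ideal.map_comap_of_surjective mk hmksurj u'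
      rw [← h6, h5]
    have hrlt : r.map mk < q.map mk := by
      refine lt_of_le_of_ne (Ideal.map_mono hrq.le) ?_
      intro hcontra
      have h7 : (r.map mk).comap mk = (q.map mk).comap mk := congrArg _ hcontra
      rw [hcomap r htlt.le, hcomap q (le_trans htlt.le hrq.le)] at h7
      exact hrq.ne h7
    have hbot : r.map mk = ⊥ :=
      myPIT (x := mk x₁) (q := q.map mk) hmin' (Ideal.mem_map_of_mem mk hx₁q) hrlt
    rw [Ideal.map_eq_bot_iff_le_ker, hker] at hbot
    exact (lt_iff_le_not_ge.mp htlt).2 hbot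
  -- apply PIT to r and c₁
  have hyr : y ∈ r := hy
  have hc₁r : c₁ < r := lt_of_lt_of_le h12 hc2r
  have := myPIT (x := y) (q := r)
    (fun u hu hyu hur => hminr u hu hyu hur) hyr hc₁r
  exact hc1 this

theorem myFDO (X : Type*) [PartialOrder X] [Finite X] [Nonempty X] :
    FiniteDimensionalOrder X := by
  constructor
  haveI := Fintype.ofFinite X
  have hbdd : ∀ p : LTSeries X, p.length ≤ Fintype.card X := by
    intro p
    have h2 : Fintype.card (Fin (p.length + 1)) ≤ Fintype.card X :=
      Fintype.card_le_of_injective p p.strictMono.injective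
    rw [Fintype.card_fin] at h2; omega
  set S : Set ℕ := Set.range fun p : LTSeries X => p.length with hS
  have hSne : S.Nonempty := ⟨_, ⟨RelSeries.singleton _ (Classical.arbitrary X), rfl⟩⟩
  have hSbdd : BddAbove S := ⟨Fintype.card X, by rintro n ⟨p, rfl⟩; exact hbdd p⟩
  obtain ⟨p, hp⟩ := Nat.sSup_mem hSne hSbdd
  refine ⟨p, fun y => ?_⟩
  have : p.length = sSup S := hp
  rw [this]
  exact le_csSup hSbdd ⟨y, rfl⟩

/-- Let `X` be a finite poset admitting a dimension-preserving saturated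
embedding `φ` into the spectrum of a Noetherian local UFD `A`.  Then `X` has a
unique minimal node and a unique maximal node, and whenever `x, y ∈ X` satisfy
`ht x = 1` and `y` covers `x`, one has `ht y = 2`. -/
theorem necessity_of_conditions_for_dimension_preserving_embedding
    {X : Type*} [PartialOrder X] [Finite X] [Nonempty X]
    {A : Type*} [CommRing A] [IsDomain A] [IsNoetherianRing A] [IsLocalRing A]
    [UniqueFactorizationMonoid A]
    (φ : X → PrimeSpectrum A)
    (hemb : ∀ a b : X, a ≤ b ↔ φ a ≤ φ b)
    (hsat : ∀ a b : X, a ⋖ b → φ a ⋖ φ b)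
    (hdim : Order.krullDim X = ringKrullDim A) :
    (∃! m : X, IsMin m) ∧ (∃! m : X, IsMax m) ∧
      ∀ x y : X, Order.height x = 1 → x ⋖ y → Order.height y = 2 := by
  classical
  have hmono : StrictMono φ := by
    intro a b hab
    refine lt_of_le_of_ne ((hemb a b).1 hab.le) (fun h => hab.ne ?_)
    exact le_antisymm hab.le ((hemb b a).2 (le_of_eq h.symm))
  -- conversion lemmas between PrimeSpectrum order and ideal order
  have hlt_ideal : ∀ u v : PrimeSpectrum A, u < v → u.asIdeal < v.asIdeal := by
    intro u v h
    exact lt_of_le_of_ne h.le (fun he => h.ne (PrimeSpectrum.ext he))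
  have hlt_pt : ∀ u v : PrimeSpectrum A, u.asIdeal < v.asIdeal → u < v := by
    intro u v h
    exact lt_of_le_of_ne h.le (fun he => h.ne (congrArg PrimeSpectrum.asIdeal he))
  haveI : FiniteDimensionalOrder X := myFDO X
  set c : LTSeries X := LTSeries.longestOf X with hc
  have hdimX : Order.krullDim X = c.length := Order.krullDim_eq_length_of_finiteDimensionalOrder
  have hdimA : Order.krullDim (PrimeSpectrum A) = (c.length : ℕ) := by
    rw [show Order.krullDim (PrimeSpectrum A) = ringKrullDim A from rfl, ← hdim]
    exact hdimX
  have hlenbound : ∀ e : LTSeries (PrimeSpectrum A), e.length ≤ c.length := by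
    intro e
    have h1 := Order.LTSeries.length_le_krullDim e
    rw [hdimA] at h1
    exact_mod_cast h1
  set d : LTSeries (PrimeSpectrum A) := c.map φ hmono with hd
  have hd_len : d.length = c.length := rfl
  set b : X := c.head with hb
  set t : X := c.last with ht
  -- the head of the image chain is the zero ideal
  have hbbot : (φ b).asIdeal = ⊥ := by
    by_contra hne
    have hzlt : (⟨⊥, Ideal.bot_prime⟩ : PrimeSpectrum A) < d.head := by
      rw [show d.head = φ b from RelSeries.head_map c ⟨φ, fun h => hmono h⟩]
      refine lt_of_le_of_ne (show (⊥ : Ideal A) ≤ (φ b).asIdeal from bot_le) ?_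
      exact fun h => hne (congrArg PrimeSpectrum.asIdeal h).symm
    have h2 := hlenbound (d.cons _ hzlt)
    simp only [RelSeries.cons_length, hd_len] at h2
    omega
  -- the last of the image chain is the maximal ideal
  have httop : ∀ z : PrimeSpectrum A, z ≤ φ t := by
    intro z
    by_contra hne'
    have hle : (φ t).asIdeal ≤ IsLocalRing.maximalIdeal A :=
      IsLocalRing.le_maximalIdeal (φ t).2.ne_top
    have hne : (φ t).asIdeal ≠ IsLocalRing.maximalIdeal A := by
      intro heq
      apply hne'
      show z.asIdeal ≤ (φ t).asIdeal
      rw [heq]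
      exact IsLocalRing.le_maximalIdeal z.2.ne_top
    have hzlt : d.last < (⟨IsLocalRing.maximalIdeal A,
        (IsLocalRing.maximalIdeal.isMaximal A).isPrime⟩ : PrimeSpectrum A) := by
      rw [show d.last = φ t from RelSeries.last_map c ⟨φ, fun h => hmono h⟩]
      exact lt_of_le_of_ne hle (fun h => hne (congrArg PrimeSpectrum.asIdeal h))
    have h2 := hlenbound (d.snoc _ hzlt)
    simp only [RelSeries.snoc_length, hd_len] at h2
    omega
  -- b is the bottom of X
  have hbble : ∀ z : X, b ≤ z := by
    intro z
    refine (hemb b z).2 ?_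
    show (φ b).asIdeal ≤ (φ z).asIdeal
    rw [hbbot]
    exact bot_le
  have httle : ∀ z : X, z ≤ t := fun z => (hemb z t).2 (httop (φ z))
  refine ⟨⟨b, fun z hz => hbble z, fun z hz => le_antisymm (hz (hbble z)) (hbble z)⟩,
    ⟨t, fun z hz => httle z, fun z hz => le_antisymm (httle z) (hz (httle z))⟩, ?_⟩
  -- the height condition
  intro x y hx hxy
  have hminy : ∀ z : X, z < x → IsMin z := by
    intro z hz
    have h1 : Order.height x ≤ (1 : ℕ) := by
      rw [hx]; norm_num
    have h2 := (Order.height_le_coe_iff).mp h1 z hz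
    rw [show ((1:ℕ) : ℕ∞) = 0 + 1 from by norm_num, ENat.lt_add_one_iff (by simp)] at h2
    rw [nonpos_iff_eq_zero, Order.height_eq_zero] at h2
    exact h2
  have hbx : b ⋖ x := by
    constructor
    · refine lt_of_le_of_ne (hbble x) ?_
      intro heq
      have : Order.height x = 0 := Order.height_eq_zero.mpr (by
        rw [← heq]; exact fun z hz => hbble z)
      rw [hx] at this
      exact one_ne_zero this
    · intro z hbz hzx
      exact absurd (hminy z hzx hbz.le) (not_le_of_gt hbz)
  have covZ : φ b ⋖ φ x := hsat b x hbx
  have covPQ : φ x ⋖ φ y := hsat x y hxy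
  -- height y ≥ 2
  have hge : (2 : ℕ∞) ≤ Order.height y := by
    have hbxlt : b < x := hbx.lt
    have hxylt : x < y := hxy.lt
    let s1 : LTSeries X := RelSeries.singleton _ b
    let s2 : LTSeries X := s1.snoc x (show s1.last < x from hbxlt)
    have hs2last : s2.last = x := RelSeries.last_snoc _ _ _
    let s : LTSeries X := s2.snoc y (show s2.last < y from hs2last ▸ hxylt)
    have hslast : s.last = y := RelSeries.last_snoc _ _ _
    have hslen : s.length = 2 := rfl
    have hfin := Order.length_le_height_last (p := s)
    rw [hslen, hslast] at hfin
    exact_mod_cast hfin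
  -- height y ≤ 2
  have hle : Order.height y ≤ (2 : ℕ∞) := by
    by_contra hgt
    have h3 : ((3:ℕ) : ℕ∞) ≤ Order.height y := by
      have h2 : (2 : ℕ∞) < Order.height y := lt_of_not_ge hgt
      exact_mod_cast Order.add_one_le_of_lt h2
    obtain ⟨s3, hs3last, hs3len⟩ := Order.exists_series_of_le_height y h3
    -- extract the chain elements
    have h4 : s3.length = 3 := hs3len
    let i0 : Fin (s3.length + 1) := ⟨0, by omega⟩
    let i1 : Fin (s3.length + 1) := ⟨1, by omega⟩
    let i2 : Fin (s3.length + 1) := ⟨2, by omega⟩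
    let i3 : Fin (s3.length + 1) := ⟨3, by omega⟩
    have h01 : s3 i0 < s3 i1 := s3.strictMono (show i0 < i1 from by simp [i0, i1, Fin.lt_def])
    have h12' : s3 i1 < s3 i2 := s3.strictMono (show i1 < i2 from by simp [i1, i2, Fin.lt_def])
    have h23 : s3 i2 < s3 i3 := s3.strictMono (show i2 < i3 from by simp [i2, i3, Fin.lt_def])
    have hlast3 : s3 i3 = y := by
      rw [← hs3last]
      show s3 i3 = s3 (Fin.last _)
      congr 1
      ext
      simp [i3, h4]
    have hzx : (φ b).asIdeal < (φ x).asIdeal := hlt_ideal _ _ covZ.lt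
    rw [hbbot] at hzx
    refine myRing_main (A := A) (p := (φ x).asIdeal) (q := (φ y).asIdeal)
      (φ x).2 (φ y).2 ?_ ?_ ?_ ?_
      (c₁ := (φ (s3 i1)).asIdeal) (c₂ := (φ (s3 i2)).asIdeal) (φ _).2 (φ _).2 ?_ ?_ ?_
    · intro h
      rw [h] at hzx
      exact not_lt_bot hzx
    · intro tI htI hlt
      by_contra hne
      have hlt1 : (⟨tI, htI⟩ : PrimeSpectrum A) < φ x := hlt_pt _ _ hlt
      have hlt2 : φ b < (⟨tI, htI⟩ : PrimeSpectrum A) := by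
        refine lt_of_le_of_ne (show (φ b).asIdeal ≤ tI from ?_) ?_
        · rw [hbbot]; exact bot_le
        · intro h
          exact hne (by rw [show tI = (φ b).asIdeal from (congrArg PrimeSpectrum.asIdeal h).symm, hbbot])
      exact covZ.2 hlt2 hlt1
    · exact hlt_ideal _ _ covPQ.lt
    · intro tI htI h1I h2I
      exact covPQ.2 (hlt_pt _ ⟨tI, htI⟩ h1I) (hlt_pt ⟨tI, htI⟩ _ h2I)
    · intro h
      have := hlt_ideal _ _ (hmono h01)
      rw [h] at this
      exact not_lt_bot this
    · exact hlt_ideal _ _ (hmono h12')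
    · exact hlt_ideal _ _ (hmono (hlast3 ▸ h23))
  exact le_antisymm hle hge
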